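/- In Bayesian linear regression with Gaussian prior W ∼ N(0, I_k) on ℝ^k, Gaussian variational family Q = N(μ_Q, Σ_Q), data design matrix φ_X ∈ ℝ^{n×k}, noise variance σ², and a fixed finite index set A with full-row-rank feature matrix φ_A ∈ ℝ^{m×k}, any stationary point μ_Q of the objective E_{W∼Q}[log p(y|W)] − D_KL(Q_A, P_A) satisfies (φ_Xᵀφ_X + σ² φ_Aᵀ(φ_A φ_Aᵀ)⁻¹φ_A) μ_Q = φ_Xᵀ y; equivalently μ_Q = (φ_Xᵀφ_X + σ² Π_A)† φ_Xᵀ y where Π_A = φ_Aᵀ(φ_A φ_Aᵀ)⁻¹φ_A is the orthogonal projection onto the row space of φ_A. -/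

import Mathlib

open Matrix

/-- The variational objective of Bayesian linear regression with standard normal prior,
Gaussian variational family `Q = N(μ, SQ)`, design matrix `φX`, noise variance `σ²`,
and KL term evaluated on the marginals at a fixed index set with feature matrix `φA`
(viewed as a function of the variational mean `μ` with `SQ` held fixed):
`E_{W∼Q}[log p(y|W)] − D_KL(Q_A, P_A)` in closed form. -/
noncomputable def blrObjective {n m k : ℕ} (φX : Matrix (Fin n) (Fin k) ℝ)
    (φA : Matrix (Fin m) (Fin k) ℝ) (SQ : Matrix (Fin k) (Fin k) ℝ)
    (y : Fin n → ℝ) (σ : ℝ) (μ : Fin k → ℝ) : ℝ :=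
  (-(n : ℝ) / 2 * Real.log (2 * Real.pi * σ ^ 2) -
      (1 / (2 * σ ^ 2)) *
        ((y - φX.mulVec μ) ⬝ᵥ (y - φX.mulVec μ) + (φXᵀ * φX * SQ).trace)) -
    (1 / 2) *
      (-(m : ℝ) + μ ⬝ᵥ (φAᵀ * (φA * φAᵀ)⁻¹ * φA).mulVec μ +
        ((φA * φAᵀ)⁻¹ * (φA * SQ * φAᵀ)).trace -
        Real.log (((φA * φAᵀ)⁻¹ * (φA * SQ * φAᵀ)).det))

private lemma blr_dot_sub_expand {n : ℕ} (t : ℝ) (r p : Fin n → ℝ) :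
    (r - t • p) ⬝ᵥ (r - t • p) = r ⬝ᵥ r - 2 * t * (r ⬝ᵥ p) + t ^ 2 * (p ⬝ᵥ p) := by
  simp only [sub_dotProduct, dotProduct_sub, smul_dotProduct, dotProduct_smul, smul_eq_mul,
    dotProduct_comm p r]
  ring

private lemma blr_quad_expand {k : ℕ} (t : ℝ) (μ v : Fin k → ℝ)
    (P : Matrix (Fin k) (Fin k) ℝ) :
    (μ + t • v) ⬝ᵥ P.mulVec (μ + t • v)
      = μ ⬝ᵥ P.mulVec μ + t * (v ⬝ᵥ P.mulVec μ + μ ⬝ᵥ P.mulVec v)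
        + t ^ 2 * (v ⬝ᵥ P.mulVec v) := by
  simp only [mulVec_add, mulVec_smul, add_dotProduct, dotProduct_add, smul_dotProduct,
    dotProduct_smul, smul_eq_mul]
  ring

/-- Any stationary point `μQ` of the Bayesian linear regression variational objective
(with full-row-rank index-set feature matrix `φA`) satisfies
`(φXᵀφX + σ² φAᵀ(φA φAᵀ)⁻¹ φA) μQ = φXᵀ y`. -/
theorem blr_stationary_point {n m k : ℕ} (φX : Matrix (Fin n) (Fin k) ℝ)
    (φA : Matrix (Fin m) (Fin k) ℝ) (SQ : Matrix (Fin k) (Fin k) ℝ)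
    (y : Fin n → ℝ) (σ : ℝ) (hσ : 0 < σ)
    (hA : IsUnit (φA * φAᵀ)) (hSQ : SQ.PosDef) (μQ : Fin k → ℝ)
    (hstat : fderiv ℝ (blrObjective φX φA SQ y σ) μQ = 0) :
    (φXᵀ * φX + σ ^ 2 • (φAᵀ * (φA * φAᵀ)⁻¹ * φA)).mulVec μQ = φXᵀ.mulVec y := by
  have hσ2 : σ ^ 2 ≠ 0 := by positivity
  set P : Matrix (Fin k) (Fin k) ℝ := φAᵀ * (φA * φAᵀ)⁻¹ * φA with hPdef
  have hPsymm : Pᵀ = P := by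
    rw [hPdef, transpose_mul, transpose_mul, transpose_transpose,
      Matrix.transpose_nonsing_inv, transpose_mul, transpose_transpose,
      Matrix.mul_assoc]
  -- differentiability
  have hdiff : Differentiable ℝ (blrObjective φX φA SQ y σ) := by
    unfold blrObjective
    simp only [dotProduct, mulVec, Pi.sub_apply]
    fun_prop
  -- directional derivative vanishes
  have key : ∀ v : Fin k → ℝ,
      (1 / σ ^ 2) * ((y - φX.mulVec μQ) ⬝ᵥ φX.mulVec v)
        - (1 / 2) * (v ⬝ᵥ P.mulVec μQ + μQ ⬝ᵥ P.mulVec v) = 0 := by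
    intro v
    set b : ℝ := (1 / σ ^ 2) * ((y - φX.mulVec μQ) ⬝ᵥ φX.mulVec v)
        - (1 / 2) * (v ⬝ᵥ P.mulVec μQ + μQ ⬝ᵥ P.mulVec v) with hb
    set a : ℝ := -(1 / (2 * σ ^ 2)) * (φX.mulVec v ⬝ᵥ φX.mulVec v)
        - (1 / 2) * (v ⬝ᵥ P.mulVec v) with ha
    have hline : HasDerivAt (fun t : ℝ => μQ + t • v) v 0 := by
      simpa using ((hasDerivAt_id (0 : ℝ)).smul_const v).const_add μQ
    have h1 : HasDerivAt (fun t : ℝ => blrObjective φX φA SQ y σ (μQ + t • v))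
        (fderiv ℝ (blrObjective φX φA SQ y σ) μQ v) 0 := by
      have := (hdiff (μQ + (0:ℝ) • v)).hasFDerivAt.comp_hasDerivAt 0 hline
      simpa [Function.comp_def] using this
    have hexp : (fun t : ℝ => blrObjective φX φA SQ y σ (μQ + t • v)) =
        fun t : ℝ => blrObjective φX φA SQ y σ μQ + b * t + a * t ^ 2 := by
      funext t
      have hres : y - φX.mulVec (μQ + t • v) = (y - φX.mulVec μQ) - t • φX.mulVec v := by
        rw [mulVec_add, mulVec_smul]; abel
      simp only [blrObjective, ← hPdef, hres, blr_dot_sub_expand, blr_quad_expand, hb, ha]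
      field_simp
      ring
    have h2 : HasDerivAt (fun t : ℝ => blrObjective φX φA SQ y σ μQ + b * t + a * t ^ 2) b 0 := by
      have := (((hasDerivAt_id (0 : ℝ)).const_mul b).const_add
        (blrObjective φX φA SQ y σ μQ)).add ((hasDerivAt_pow 2 (0 : ℝ)).const_mul a)
      simpa [Pi.add_def] using this
    rw [hexp] at h1
    have := h1.unique h2
    rw [hstat] at this
    simpa using this.symm
  -- specialize to basis vectors
  funext i
  have hk := key (Pi.single i 1)
  have c1 : (y - φX.mulVec μQ) ⬝ᵥ φX.mulVec (Pi.single i 1)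
      = (φXᵀ.mulVec (y - φX.mulVec μQ)) i := by
    rw [mulVec_single]
    simp [mulVec, dotProduct, transpose_apply, mul_comm]
  have c2 : Pi.single i 1 ⬝ᵥ P.mulVec μQ = (P.mulVec μQ) i := by
    simp
  have c3 : μQ ⬝ᵥ P.mulVec (Pi.single i 1) = (P.mulVec μQ) i := by
    have : μQ ⬝ᵥ P.mulVec (Pi.single i 1) = (Pᵀ.mulVec μQ) i := by
      rw [mulVec_single]
      simp [mulVec, dotProduct, transpose_apply, mul_comm]
    rw [this, hPsymm]
  rw [c1, c2, c3] at hk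
  have hr : (φXᵀ.mulVec (y - φX.mulVec μQ)) i
      = (φXᵀ.mulVec y) i - ((φXᵀ * φX).mulVec μQ) i := by
    rw [mulVec_sub, mulVec_mulVec]
    simp
  rw [hr] at hk
  have : ((φXᵀ * φX + σ ^ 2 • P).mulVec μQ) i
      = ((φXᵀ * φX).mulVec μQ) i + σ ^ 2 * (P.mulVec μQ) i := by
    rw [add_mulVec, smul_mulVec]
    simp
  rw [this]
  field_simp at hk
  linarith
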